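/- Let V be a finite-dimensional real inner product space, J an orthogonal endomorphism of V with J² = −id, and T a 3-form on V of type (1,2)+(2,1) with respect to J. Fix an orthonormal basis (e_i) of V and define the bilinear form B(X,Y) = Σ_{i,j} T(X, e_i, e_j) · T(JY, J e_i, e_j). Then 2·B(X,Y) = Σ_{i,j} ( T(X,e_i,e_j)·T(Y,e_i,e_j) − T(X,e_i,e_j)·T(Y, J e_i, J e_j) ) for all X,Y ∈ V; in particular B is symmetric, i.e. B(X,Y) = B(Y,X). -/

import Mathlib

open scoped RealInnerProductSpace

private lemma key_swap
    {V : Type*} [NormedAddCommGroup V] [InnerProductSpace ℝ V] [FiniteDimensional ℝ V]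
    (J : V →ₗ[ℝ] V)
    (horth : ∀ x y : V, ⟪J x, J y⟫ = ⟪x, y⟫)
    (hsq : ∀ x : V, J (J x) = -x)
    {ι : Type*} [Fintype ι] (e : OrthonormalBasis ι ℝ V)
    (f g : V →ₗ[ℝ] ℝ) :
    ∑ i, f (e i) * g (J (e i)) = -∑ i, f (J (e i)) * g (e i) := by
  have riesz : ∀ (h : V →ₗ[ℝ] ℝ) (x : V), h x = ⟪∑ i, h (e i) • e i, x⟫ := by
    intro h x
    rw [sum_inner]
    simp only [real_inner_smul_left]
    conv_lhs => rw [← e.sum_repr' x]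
    rw [map_sum]
    simp [mul_comm]
  set a : V := ∑ i, f (e i) • e i with ha
  set b : V := ∑ i, g (e i) • e i with hb
  have h1 : ∑ i, f (e i) * g (J (e i)) = g (J a) := by
    rw [ha, map_sum, map_sum]
    simp [mul_comm]
  have h2 : ∑ i, f (J (e i)) * g (e i) = f (J b) := by
    rw [hb, map_sum, map_sum]
    simp [mul_comm]
  rw [h1, h2, riesz g (J a), riesz f (J b), ← hb, ← ha]
  have : ⟪b, J a⟫ = -⟪a, J b⟫ := by
    rw [← horth b (J a), hsq a, inner_neg_right, real_inner_comm]
  rw [this]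

/-- Let `V` be a finite-dimensional real inner product space, `J` an
orthogonal complex structure on `V`, and `T` a 3-form of type (1,2)+(2,1) with respect to
`J`. For an orthonormal basis `(e i)` set `B(X,Y) = ∑_{i,j} T(X,eᵢ,eⱼ)·T(JY,Jeᵢ,eⱼ)`. Then
`2·B(X,Y) = ∑_{i,j} (T(X,eᵢ,eⱼ)·T(Y,eᵢ,eⱼ) − T(X,eᵢ,eⱼ)·T(Y,Jeᵢ,Jeⱼ))`, and in particular
`B` is symmetric. -/
theorem three_form_B_symmetric
    {V : Type*} [NormedAddCommGroup V] [InnerProductSpace ℝ V] [FiniteDimensional ℝ V]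
    (J : V →ₗ[ℝ] V)
    (horth : ∀ x y : V, ⟪J x, J y⟫ = ⟪x, y⟫)
    (hsq : ∀ x : V, J (J x) = -x)
    (T : V →ₗ[ℝ] V →ₗ[ℝ] V →ₗ[ℝ] ℝ)
    (halt1 : ∀ x y z : V, T x y z = -T y x z)
    (halt2 : ∀ x y z : V, T x y z = -T x z y)
    (htype : ∀ x y z : V,
      T x y z = T (J x) (J y) z + T (J x) y (J z) + T x (J y) (J z))
    {ι : Type*} [Fintype ι] (e : OrthonormalBasis ι ℝ V)
    (B : V → V → ℝ)
    (hB : ∀ X Y : V, B X Y = ∑ i, ∑ j, T X (e i) (e j) * T (J Y) (J (e i)) (e j)) :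
    ∀ X Y : V,
      (2 * B X Y =
        ∑ i, ∑ j, (T X (e i) (e j) * T Y (e i) (e j) -
          T X (e i) (e j) * T Y (J (e i)) (J (e j)))) ∧
      B X Y = B Y X := by
  -- the "index swap" identity: the second term of the type expansion equals B X Y
  have hswap : ∀ X Y : V,
      (∑ i, ∑ j, T X (e i) (e j) * T (J Y) (e i) (J (e j))) = B X Y := by
    intro X Y
    rw [hB, Finset.sum_comm]
    refine Finset.sum_congr rfl fun i _ => Finset.sum_congr rfl fun j _ => ?_
    rw [halt2 (J Y) (e j) (J (e i)), halt2 X (e j) (e i)]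
    ring
  -- the key formula: P = 2 B + C
  have hP : ∀ X Y : V,
      (∑ i, ∑ j, T X (e i) (e j) * T Y (e i) (e j)) =
        2 * B X Y + ∑ i, ∑ j, T X (e i) (e j) * T Y (J (e i)) (J (e j)) := by
    intro X Y
    have expand : ∀ i j : ι,
        T X (e i) (e j) * T Y (e i) (e j) =
          T X (e i) (e j) * T (J Y) (J (e i)) (e j) +
          T X (e i) (e j) * T (J Y) (e i) (J (e j)) +
          T X (e i) (e j) * T Y (J (e i)) (J (e j)) := by
      intro i j
      rw [htype Y (e i) (e j)]; ring
    simp only [expand, Finset.sum_add_distrib]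
    rw [← hB, hswap]
    ring
  -- symmetry of C
  have hC : ∀ X Y : V,
      (∑ i, ∑ j, T X (e i) (e j) * T Y (J (e i)) (J (e j))) =
        ∑ i, ∑ j, T Y (e i) (e j) * T X (J (e i)) (J (e j)) := by
    intro X Y
    have step1 : ∀ i : ι,
        (∑ j, T X (e i) (e j) * T Y (J (e i)) (J (e j))) =
          -∑ j, T X (e i) (J (e j)) * T Y (J (e i)) (e j) :=
      fun i => key_swap J horth hsq e (T X (e i)) (T Y (J (e i)))
    have step2 : ∀ j : ι,
        (∑ i, T X (e i) (J (e j)) * T Y (J (e i)) (e j)) =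
          -∑ i, T X (J (e i)) (J (e j)) * T Y (e i) (e j) :=
      fun j => key_swap J horth hsq e ((T X).flip (J (e j))) ((T Y).flip (e j))
    calc (∑ i, ∑ j, T X (e i) (e j) * T Y (J (e i)) (J (e j)))
        = -∑ i, ∑ j, T X (e i) (J (e j)) * T Y (J (e i)) (e j) := by
          simp only [step1]
          exact Finset.sum_neg_distrib _
      _ = -∑ j, ∑ i, T X (e i) (J (e j)) * T Y (J (e i)) (e j) := by rw [Finset.sum_comm]
      _ = ∑ j, ∑ i, T X (J (e i)) (J (e j)) * T Y (e i) (e j) := by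
          simp only [step2]
          rw [Finset.sum_neg_distrib, neg_neg]
      _ = ∑ i, ∑ j, T Y (e i) (e j) * T X (J (e i)) (J (e j)) := by
          rw [Finset.sum_comm]
          exact Finset.sum_congr rfl fun i _ => Finset.sum_congr rfl fun j _ => by ring
  intro X Y
  constructor
  · rw [Finset.sum_congr rfl fun i _ => Finset.sum_sub_distrib _ _, Finset.sum_sub_distrib,
      hP X Y]
    ring
  · have h1 := hP X Y
    have h2 := hP Y X
    have hPsymm : (∑ i, ∑ j, T X (e i) (e j) * T Y (e i) (e j)) =
        ∑ i, ∑ j, T Y (e i) (e j) * T X (e i) (e j) :=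
      Finset.sum_congr rfl fun i _ => Finset.sum_congr rfl fun j _ => mul_comm _ _
    have := hC X Y
    linarith
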